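/- Let T = {(z_1,…,z_n) ∈ ℂ^n : all |z_j| = 1} and D = {(z_1,…,z_n) ∈ ℂ^n : all |z_j| ≤ 1}, and fix a compact set K ⊆ GL_n(ℂ). Then there is m_0 > 0 such that for every m ≥ m_0 and every (g_1, …, g_m) ∈ K^m, there exist continuous functions f_1, …, f_m : D → T such that ∑_{i=1}^m g_i f_i(z) = z for all z ∈ D. -/

import Mathlib

set_option maxHeartbeats 2000000

noncomputable section

def Complex.abs : AbsoluteValue ℂ ℝ := IsAbsoluteValue.toAbsoluteValue (norm : ℂ → ℝ)

theorem Complex.abs_eq_norm' (z : ℂ) : Complex.abs z = ‖z‖ := rfl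

theorem Complex.norm_eq_abs (z : ℂ) : ‖z‖ = Complex.abs z := rfl

theorem Complex.abs_apply (z : ℂ) : Complex.abs z = Real.sqrt (Complex.normSq z) := rfl

theorem Complex.sq_abs (z : ℂ) : Complex.abs z ^ 2 = Complex.normSq z := Complex.sq_norm z

@[simp]
theorem Complex.abs_conj (z : ℂ) : Complex.abs ((starRingEnd ℂ) z) = Complex.abs z := by
  rw [Complex.abs_eq_norm', Complex.abs_eq_norm']; simp

@[simp]
theorem Complex.abs_ofReal (r : ℝ) : Complex.abs (r : ℂ) = |r| := by
  rw [Complex.abs_eq_norm']; simp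

@[simp]
theorem Complex.abs_I : Complex.abs Complex.I = 1 := by
  rw [Complex.abs_eq_norm']; simp

@[simp]
theorem Complex.abs_natCast (k : ℕ) : Complex.abs (k : ℂ) = k := by
  rw [Complex.abs_eq_norm']; simp

@[simp]
theorem Complex.abs_ofNat (k : ℕ) [k.AtLeastTwo] : Complex.abs (no_index (OfNat.ofNat k) : ℂ) = OfNat.ofNat k := by
  rw [Complex.abs_eq_norm']; simp

namespace S12

open Complex

def co (x : ℂ) : ℝ := Real.sqrt (1 - Complex.normSq (x - 1) / 4)

def gen (σ : ℂ) (x : ℂ) : ℂ :=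
  (x - 1) / 2 + σ * (x - 1) * ((co x / Complex.abs (x - 1) : ℝ) : ℂ)

lemma t_bounds {x : ℂ} (hx : Complex.abs x ≤ 1/2) :
    1/2 ≤ Complex.abs (x - 1) ∧ Complex.abs (x - 1) ≤ 3/2 := by
  constructor
  · have heq : ((x - 1) + -x) = (-1 : ℂ) := by ring
    have h1 : (1:ℝ) = Complex.abs ((x - 1) + -x) := by rw [heq]; simp
    have h3 : Complex.abs ((x - 1) + -x) ≤ Complex.abs (x - 1) + Complex.abs (-x) :=
      Complex.abs.add_le _ _
    have h4 : Complex.abs (-x) = Complex.abs x := by simp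
    rw [h4] at h3
    linarith [h1 ▸ h3]
  · have h : Complex.abs (x - 1) ≤ Complex.abs x + Complex.abs (-1 : ℂ) := by
      simpa [sub_eq_add_neg] using Complex.abs.add_le x (-1)
    have h5 : Complex.abs (-1 : ℂ) = 1 := by simp
    rw [h5] at h
    linarith

lemma normSq_bounds {x : ℂ} (hx : Complex.abs x ≤ 1/2) :
    1/4 ≤ Complex.normSq (x - 1) ∧ Complex.normSq (x - 1) ≤ 9/4 := by
  obtain ⟨h1, h2⟩ := t_bounds hx
  rw [← Complex.sq_abs]
  constructor <;> nlinarith [Complex.abs.nonneg (x - 1)]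

lemma co_bounds {x : ℂ} (hx : Complex.abs x ≤ 1/2) :
    1/2 ≤ co x ∧ co x ≤ 1 := by
  obtain ⟨h1, h2⟩ := normSq_bounds hx
  constructor
  · have : (1:ℝ)/2 = Real.sqrt (1/4) := by
      rw [show (1:ℝ)/4 = (1/2)^2 by norm_num, Real.sqrt_sq (by norm_num)]
    rw [this, co]
    apply Real.sqrt_le_sqrt; linarith
  · have h := Real.sqrt_le_sqrt (show 1 - Complex.normSq (x-1)/4 ≤ 1 by linarith)
    simpa [co] using h

lemma co_sq {x : ℂ} (hx : Complex.abs x ≤ 1/2) :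
    co x ^ 2 = 1 - Complex.normSq (x - 1) / 4 := by
  obtain ⟨h1, h2⟩ := normSq_bounds hx
  rw [co, Real.sq_sqrt]; linarith

lemma gen_abs {σ x : ℂ} (hσre : σ.re = 0) (hσ : Complex.abs σ = 1)
    (hx : Complex.abs x ≤ 1/2) : Complex.abs (gen σ x) = 1 := by
  obtain ⟨ht1, ht2⟩ := t_bounds hx
  set y := x - 1 with hy
  set t : ℝ := Complex.abs y with htdef
  set s : ℝ := co x with hsdef
  have hb : gen σ x = y / 2 + σ * y * ((s / t : ℝ) : ℂ) := rfl
  have hnormSq : Complex.normSq (gen σ x) = 1 := by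
    rw [hb, Complex.normSq_add]
    have h1 : Complex.normSq (y / 2) = Complex.normSq y / 4 := by
      rw [Complex.normSq_div]; norm_num
    have h2 : Complex.normSq (σ * y * ((s / t : ℝ) : ℂ)) = Complex.normSq y * (s/t)^2 := by
      rw [Complex.normSq_mul, Complex.normSq_mul, Complex.normSq_ofReal]
      have : Complex.normSq σ = 1 := by
        rw [← Complex.sq_abs, hσ]; norm_num
      rw [this]; ring
    have h3 : (y / 2 * (starRingEnd ℂ) (σ * y * ((s / t : ℝ) : ℂ))).re = 0 := by
      set r : ℝ := s / t with hrdef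
      have key : y / 2 * (starRingEnd ℂ) (σ * y * ((r : ℝ) : ℂ))
          = (starRingEnd ℂ) σ * ((Complex.normSq y * r / 2 : ℝ) : ℂ) := by
        rw [map_mul, map_mul, Complex.conj_ofReal]
        push_cast
        linear_combination ((r : ℝ) : ℂ) * (starRingEnd ℂ) σ / 2 * (Complex.mul_conj y)
      rw [key, Complex.mul_re]
      simp [Complex.conj_re, Complex.conj_im, hσre]
    rw [h1, h2, h3]
    have hsq : s^2 = 1 - Complex.normSq y / 4 := co_sq hx
    have hns : Complex.normSq y = t^2 := (Complex.sq_abs y).symm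
    have ht0 : t ≠ 0 := by linarith
    field_simp
    nlinarith [hsq, hns]
  rw [Complex.abs_apply, hnormSq, Real.sqrt_one]

lemma gen_add (x : ℂ) : gen Complex.I x + gen (-Complex.I) x = x - 1 := by
  unfold gen; ring


lemma co_diff {a b : ℂ} (ha : Complex.abs a ≤ 1/2) (hb : Complex.abs b ≤ 1/2) :
    |co a - co b| ≤ (3/4) * Complex.abs (a - b) := by
  obtain ⟨hta1, hta2⟩ := t_bounds ha
  obtain ⟨htb1, htb2⟩ := t_bounds hb
  obtain ⟨hsa1, hsa2⟩ := co_bounds ha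
  obtain ⟨hsb1, hsb2⟩ := co_bounds hb
  have hdiffeq : (a - 1) - (b - 1) = a - b := by ring
  have htd : |Complex.abs (a-1) - Complex.abs (b-1)| ≤ Complex.abs (a - b) := by
    have := Complex.abs.abs_abv_sub_le_abv_sub (a-1) (b-1)
    rwa [hdiffeq] at this
  have hsqdiff : (co a - co b) * (co a + co b)
      = (Complex.abs (b-1)^2 - Complex.abs (a-1)^2) / 4 := by
    have h1 := co_sq ha
    have h2 := co_sq hb
    have h3 : Complex.normSq (a-1) = Complex.abs (a-1)^2 := (Complex.sq_abs _).symm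
    have h4 : Complex.normSq (b-1) = Complex.abs (b-1)^2 := (Complex.sq_abs _).symm
    nlinarith [h1, h2, h3, h4]
  have habd : Complex.abs (a - b) ≥ 0 := Complex.abs.nonneg _
  rw [abs_le]
  rw [abs_le] at htd
  constructor <;> nlinarith [hsqdiff]

lemma gen_lip {σ : ℂ} (hσ : Complex.abs σ ≤ 1) {a b : ℂ}
    (ha : Complex.abs a ≤ 1/2) (hb : Complex.abs b ≤ 1/2) :
    Complex.abs (gen σ a - gen σ b) ≤ 100 * Complex.abs (a - b) := by
  obtain ⟨hta1, hta2⟩ := t_bounds ha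
  obtain ⟨htb1, htb2⟩ := t_bounds hb
  obtain ⟨hsa1, hsa2⟩ := co_bounds ha
  obtain ⟨hsb1, hsb2⟩ := co_bounds hb
  set ta : ℝ := Complex.abs (a - 1)
  set tb : ℝ := Complex.abs (b - 1)
  set sa : ℝ := co a
  set sb : ℝ := co b
  set D : ℝ := Complex.abs (a - b) with hD
  have hD0 : 0 ≤ D := Complex.abs.nonneg _
  have hdiffeq : (a - 1) - (b - 1) = a - b := by ring
  have htd : |ta - tb| ≤ D := by
    have := Complex.abs.abs_abv_sub_le_abv_sub (a-1) (b-1)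
    rwa [hdiffeq] at this
  have hsd : |sa - sb| ≤ (3/4) * D := co_diff ha hb
  -- h-coefficients
  have hha0 : ta ≠ 0 := by linarith
  have hhb0 : tb ≠ 0 := by linarith
  have hhdiff : |sa / ta - sb / tb| ≤ 11/2 * D := by
    have e : sa / ta - sb / tb = (sa - sb) / ta + sb * (tb - ta) / (ta * tb) := by
      field_simp; ring
    rw [e]
    have h1 : |(sa - sb) / ta| ≤ 2 * |sa - sb| := by
      rw [abs_div]
      rw [abs_of_pos (by linarith : (0:ℝ) < ta)]
      rw [div_le_iff₀ (by linarith : (0:ℝ) < ta)]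
      nlinarith [abs_nonneg (sa - sb)]
    have h2 : |sb * (tb - ta) / (ta * tb)| ≤ 4 * |tb - ta| := by
      have hpos : (0:ℝ) < ta * tb := by nlinarith
      rw [abs_div, abs_mul]
      rw [abs_of_pos hpos]
      rw [div_le_iff₀ hpos]
      have hsb : |sb| ≤ 1 := by rw [abs_of_pos (by linarith : (0:ℝ) < sb)]; linarith
      have h6 : |sb| * |tb - ta| ≤ |tb - ta| := by
        nlinarith [abs_nonneg (tb - ta)]
      have h14 : (1:ℝ) ≤ 4 * (ta * tb) := by nlinarith
      have h7 : |tb - ta| ≤ 4 * |tb - ta| * (ta * tb) := by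
        nlinarith [mul_le_mul_of_nonneg_left h14 (abs_nonneg (tb - ta))]
      linarith
    have h3 : |tb - ta| ≤ D := by rw [abs_sub_comm]; exact htd
    calc |(sa - sb) / ta + sb * (tb - ta) / (ta * tb)|
        ≤ |(sa - sb) / ta| + |sb * (tb - ta) / (ta * tb)| := abs_add_le _ _
      _ ≤ 2 * |sa - sb| + 4 * |tb - ta| := by linarith
      _ ≤ 11/2 * D := by linarith
  -- main decomposition
  have hgd : gen σ a - gen σ b
      = (a - b)/2 + σ * ((a-1) * ((sa/ta : ℝ):ℂ) - (b-1) * ((sb/tb : ℝ):ℂ)) := by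
    unfold gen; ring
  have hmid : Complex.abs ((a-1) * ((sa/ta : ℝ):ℂ) - (b-1) * ((sb/tb : ℝ):ℂ))
      ≤ 2 * D + (3/2) * (11/2 * D) := by
    have e : (a-1) * ((sa/ta : ℝ):ℂ) - (b-1) * ((sb/tb : ℝ):ℂ)
        = (a - b) * ((sa/ta : ℝ):ℂ) + (b-1) * (((sa/ta : ℝ):ℂ) - ((sb/tb : ℝ):ℂ)) := by
      have : (a-1) - (b-1) = a - b := by ring
      linear_combination (((sa/ta : ℝ):ℂ)) * this
    rw [e]
    have h1 : Complex.abs ((a - b) * ((sa/ta : ℝ):ℂ)) ≤ D * 2 := by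
      rw [map_mul, Complex.abs_ofReal]
      have : |sa / ta| ≤ 2 := by
        rw [abs_div, abs_of_pos (by linarith : (0:ℝ) < sa),
          abs_of_pos (by linarith : (0:ℝ) < ta)]
        rw [div_le_iff₀ (by linarith : (0:ℝ) < ta)]; linarith
      nlinarith
    have h2 : Complex.abs ((b-1) * (((sa/ta : ℝ):ℂ) - ((sb/tb : ℝ):ℂ))) ≤ (3/2) * (11/2 * D) := by
      rw [map_mul]
      have hc : Complex.abs (((sa/ta : ℝ):ℂ) - ((sb/tb : ℝ):ℂ)) = |sa/ta - sb/tb| := by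
        rw [← Complex.ofReal_sub, Complex.abs_ofReal]
      rw [hc]
      nlinarith [abs_nonneg (sa/ta - sb/tb), Complex.abs.nonneg (b-1)]
    calc Complex.abs _ ≤ _ := Complex.abs.add_le _ _
      _ ≤ 2 * D + (3/2) * (11/2 * D) := by linarith
  calc Complex.abs (gen σ a - gen σ b)
      ≤ Complex.abs ((a-b)/2)
        + Complex.abs (σ * ((a-1) * ((sa/ta : ℝ):ℂ) - (b-1) * ((sb/tb : ℝ):ℂ))) := by
        rw [hgd]; exact Complex.abs.add_le _ _
    _ ≤ D/2 + 1 * (2 * D + (3/2) * (11/2 * D)) := by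
        rw [map_div₀, map_mul]
        simp only [Complex.abs_ofNat]
        have hx0 := Complex.abs.nonneg ((a-1) * ((sa/ta : ℝ):ℂ) - (b-1) * ((sb/tb : ℝ):ℂ))
        have hσ0 := Complex.abs.nonneg σ
        nlinarith [mul_le_mul_of_nonneg_right hσ hx0, mul_le_mul_of_nonneg_left hmid hσ0]
    _ ≤ 100 * D := by linarith


variable {n : ℕ}

def SA (A : Matrix (Fin n) (Fin n) ℂ) : ℝ := ∑ j, ∑ k, ‖A j k‖

lemma SA_nonneg (A : Matrix (Fin n) (Fin n) ℂ) : 0 ≤ SA A := by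
  apply Finset.sum_nonneg; intro j _; apply Finset.sum_nonneg; intro k _; positivity

lemma norm_mulVec_le (A : Matrix (Fin n) (Fin n) ℂ) (v : Fin n → ℂ) :
    ‖A.mulVec v‖ ≤ SA A * ‖v‖ := by
  have h0 : (0:ℝ) ≤ SA A * ‖v‖ := mul_nonneg (SA_nonneg A) (norm_nonneg v)
  rw [pi_norm_le_iff_of_nonneg h0]
  intro j
  have h1 : ‖A.mulVec v j‖ ≤ ∑ k, ‖A j k‖ * ‖v k‖ := by
    rw [Matrix.mulVec, dotProduct]
    exact (norm_sum_le _ _).trans (le_of_eq (by simp [norm_mul]))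
  have h2 : ∑ k, ‖A j k‖ * ‖v k‖ ≤ ∑ k, ‖A j k‖ * ‖v‖ := by
    apply Finset.sum_le_sum; intro k _
    exact mul_le_mul_of_nonneg_left (norm_le_pi_norm v k) (norm_nonneg _)
  have h3 : ∑ k, ‖A j k‖ ≤ SA A := by
    apply Finset.single_le_sum (f := fun j => ∑ k, ‖A j k‖) (fun i _ => by positivity)
      (Finset.mem_univ j)
  calc ‖A.mulVec v j‖ ≤ ∑ k, ‖A j k‖ * ‖v‖ := h1.trans h2
    _ = (∑ k, ‖A j k‖) * ‖v‖ := by rw [Finset.sum_mul]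
    _ ≤ SA A * ‖v‖ := mul_le_mul_of_nonneg_right h3 (norm_nonneg v)

lemma continuous_SA : Continuous (SA (n := n)) := by
  apply continuous_finset_sum; intro j _
  apply continuous_finset_sum; intro k _
  exact ((continuous_apply k).comp (continuous_apply j)).norm

lemma continuous_mulVec (A : Matrix (Fin n) (Fin n) ℂ) :
    Continuous (fun v : Fin n → ℂ => A.mulVec v) := by
  haveI : FiniteDimensional ℂ (Fin n → ℂ) := by infer_instance
  have : (fun v : Fin n → ℂ => A.mulVec v) = ⇑(Matrix.mulVecLin A) := by
    funext v; simp [Matrix.mulVecLin]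
  rw [this]
  exact LinearMap.continuous_of_finiteDimensional _

/-- The key triple lemma. -/
lemma triple (Cinv : ℝ) (hC : 1 ≤ Cinv)
    (g₁ g₂ g₃ B₁ : Matrix (Fin n) (Fin n) ℂ)
    (hB₁ : g₁ * B₁ = 1) (hSB : SA B₁ ≤ Cinv)
    (h2 : SA (g₂ - g₁) ≤ 1 / (200 * Cinv))
    (h3 : SA (g₃ - g₁) ≤ 1 / (200 * Cinv)) :
    ∃ u₁ u₂ u₃ : {w : Fin n → ℂ // ‖w‖ ≤ 1/(8*Cinv)} → (Fin n → ℂ),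
      Continuous u₁ ∧ Continuous u₂ ∧ Continuous u₃ ∧
      (∀ w j, ‖u₁ w j‖ = 1) ∧ (∀ w j, ‖u₂ w j‖ = 1) ∧ (∀ w j, ‖u₃ w j‖ = 1) ∧
      ∀ w, g₁.mulVec (u₁ w) + g₂.mulVec (u₂ w) + g₃.mulVec (u₃ w) = (w : Fin n → ℂ) := by
  have hC0 : (0:ℝ) < Cinv := by linarith
  set E₂ := g₂ - g₁ with hE₂
  set E₃ := g₃ - g₁ with hE₃
  set onev : Fin n → ℂ := fun _ => 1 with honev
  have honev_norm : ‖onev‖ ≤ 1 := by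
    rw [pi_norm_le_iff_of_nonneg zero_le_one]; intro j; simp [onev]
  -- domain type
  set W := {w : Fin n → ℂ // ‖w‖ ≤ 1/(8*Cinv)} with hW
  set X := {v : Fin n → ℂ // ‖v‖ ≤ 1} with hX
  haveI : Nonempty X := ⟨⟨0, by simp⟩⟩
  haveI : CompleteSpace X := by
    have : IsClosed {v : Fin n → ℂ | ‖v‖ ≤ 1} := isClosed_le continuous_norm continuous_const
    exact this.completeSpace_coe
  -- raw inner map
  set inner : W → (Fin n → ℂ) → (Fin n → ℂ) :=
    fun w v => (w : Fin n → ℂ) - E₂.mulVec v - E₃.mulVec onev with hinner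
  set xraw : W → (Fin n → ℂ) → (Fin n → ℂ) := fun w v => B₁.mulVec (inner w v) with hxraw
  have hxnorm : ∀ (w : W) (v : Fin n → ℂ), ‖v‖ ≤ 1 → ‖xraw w v‖ ≤ 1/2 := by
    intro w v hv
    have h1 : ‖inner w v‖ ≤ 1/(8*Cinv) + 1/(200*Cinv) + 1/(200*Cinv) := by
      have ha : ‖(w : Fin n → ℂ) - E₂.mulVec v - E₃.mulVec onev‖
          ≤ ‖(w : Fin n → ℂ)‖ + ‖E₂.mulVec v‖ + ‖E₃.mulVec onev‖ := by
        calc ‖(w : Fin n → ℂ) - E₂.mulVec v - E₃.mulVec onev‖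
            ≤ ‖(w : Fin n → ℂ) - E₂.mulVec v‖ + ‖E₃.mulVec onev‖ := norm_sub_le _ _
          _ ≤ ‖(w : Fin n → ℂ)‖ + ‖E₂.mulVec v‖ + ‖E₃.mulVec onev‖ := by
              linarith [norm_sub_le (w : Fin n → ℂ) (E₂.mulVec v)]
      have hb : ‖E₂.mulVec v‖ ≤ 1/(200*Cinv) := by
        calc ‖E₂.mulVec v‖ ≤ SA E₂ * ‖v‖ := norm_mulVec_le _ _
          _ ≤ (1/(200*Cinv)) * 1 := by
              apply mul_le_mul h2 hv (norm_nonneg v) (by positivity)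
          _ = 1/(200*Cinv) := mul_one _
      have hcv : ‖E₃.mulVec onev‖ ≤ 1/(200*Cinv) := by
        calc ‖E₃.mulVec onev‖ ≤ SA E₃ * ‖onev‖ := norm_mulVec_le _ _
          _ ≤ (1/(200*Cinv)) * 1 := by
              apply mul_le_mul h3 honev_norm (norm_nonneg onev) (by positivity)
          _ = 1/(200*Cinv) := mul_one _
      exact ha.trans (by linarith [w.2])
    calc ‖xraw w v‖ ≤ SA B₁ * ‖inner w v‖ := norm_mulVec_le _ _
      _ ≤ Cinv * (1/(8*Cinv) + 1/(200*Cinv) + 1/(200*Cinv)) := by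
          apply mul_le_mul hSB h1 (norm_nonneg _) (by linarith)
      _ = 1/8 + 1/200 + 1/200 := by field_simp
      _ ≤ 1/2 := by norm_num
  have hxdom : ∀ (w : W) (v : Fin n → ℂ), ‖v‖ ≤ 1 → ∀ j, Complex.abs (xraw w v j) ≤ 1/2 := by
    intro w v hv j
    rw [← Complex.norm_eq_abs]
    exact (norm_le_pi_norm _ j).trans (hxnorm w v hv)
  -- vector gen maps
  set Qv : (Fin n → ℂ) → (Fin n → ℂ) := fun x j => gen (-Complex.I) (x j) with hQv
  set Pv : (Fin n → ℂ) → (Fin n → ℂ) := fun x j => gen Complex.I (x j) with hPv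
  have hQnorm : ∀ x : Fin n → ℂ, (∀ j, Complex.abs (x j) ≤ 1/2) → ‖Qv x‖ ≤ 1 := by
    intro x hx
    rw [pi_norm_le_iff_of_nonneg zero_le_one]
    intro j
    rw [Complex.norm_eq_abs, hQv]
    exact le_of_eq (gen_abs (by simp) (by simp) (hx j))
  have hQdiff : ∀ x y : Fin n → ℂ, (∀ j, Complex.abs (x j) ≤ 1/2) →
      (∀ j, Complex.abs (y j) ≤ 1/2) → ‖Qv x - Qv y‖ ≤ 100 * ‖x - y‖ := by
    intro x y hx hy
    have h0 : (0:ℝ) ≤ 100 * ‖x - y‖ := by positivity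
    rw [pi_norm_le_iff_of_nonneg h0]
    intro j
    have : ‖(Qv x - Qv y) j‖ = Complex.abs (gen (-Complex.I) (x j) - gen (-Complex.I) (y j)) := by
      simp [Qv, Complex.norm_eq_abs]
    rw [this]
    calc Complex.abs (gen (-Complex.I) (x j) - gen (-Complex.I) (y j))
        ≤ 100 * Complex.abs (x j - y j) := gen_lip (by simp) (hx j) (hy j)
      _ ≤ 100 * ‖x - y‖ := by
          have := norm_le_pi_norm (x - y) j
          rw [Complex.norm_eq_abs] at this
          simp only [Pi.sub_apply] at this ⊢
          linarith
  -- the contraction map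
  have hTmem : ∀ (w : W) (v : X), ‖Qv (xraw w (v : Fin n → ℂ))‖ ≤ 1 :=
    fun w v => hQnorm _ (hxdom w _ v.2)
  set T : W → X → X := fun w v => ⟨Qv (xraw w (v : Fin n → ℂ)), hTmem w v⟩ with hT
  have hxdiff : ∀ (w : W) (v v' : Fin n → ℂ),
      xraw w v - xraw w v' = B₁.mulVec (E₂.mulVec (v' - v)) := by
    intro w v v'
    rw [hxraw]
    simp only
    rw [← Matrix.mulVec_sub]
    congr 1
    rw [hinner]
    simp only
    rw [Matrix.mulVec_sub E₂ v' v]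
    abel
  have hxd2 : ∀ (w : W) (v v' : Fin n → ℂ), ‖v - v'‖ ≤ 2 →
      ‖xraw w v - xraw w v'‖ ≤ (1/200) * ‖v - v'‖ := by
    intro w v v' _
    rw [hxdiff w v v']
    calc ‖B₁.mulVec (E₂.mulVec (v' - v))‖ ≤ SA B₁ * ‖E₂.mulVec (v' - v)‖ := norm_mulVec_le _ _
      _ ≤ Cinv * (SA E₂ * ‖v' - v‖) := by
          apply mul_le_mul hSB (norm_mulVec_le _ _) (norm_nonneg _) (by linarith)
      _ ≤ Cinv * ((1/(200*Cinv)) * ‖v' - v‖) := by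
          apply mul_le_mul_of_nonneg_left _ (le_of_lt hC0)
          exact mul_le_mul_of_nonneg_right h2 (norm_nonneg _)
      _ = (1/200) * ‖v' - v‖ := by field_simp
      _ = (1/200) * ‖v - v'‖ := by rw [norm_sub_rev]
  have hcontr : ∀ w : W, ContractingWith (1/2 : NNReal) (T w) := by
    intro w
    constructor
    · rw [← NNReal.coe_lt_coe]; norm_num
    · apply LipschitzWith.of_dist_le_mul
      intro v v'
      rw [Subtype.dist_eq, Subtype.dist_eq, dist_eq_norm, dist_eq_norm]
      have h1 : ‖(T w v : Fin n → ℂ) - (T w v' : Fin n → ℂ)‖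
          ≤ 100 * ‖xraw w (v : Fin n → ℂ) - xraw w (v' : Fin n → ℂ)‖ :=
        hQdiff _ _ (hxdom w _ v.2) (hxdom w _ v'.2)
      have h2' : ‖xraw w (v : Fin n → ℂ) - xraw w (v' : Fin n → ℂ)‖
          ≤ (1/200) * ‖(v : Fin n → ℂ) - (v' : Fin n → ℂ)‖ := by
        apply hxd2
        calc ‖(v : Fin n → ℂ) - (v' : Fin n → ℂ)‖ ≤ ‖(v : Fin n → ℂ)‖ + ‖(v' : Fin n → ℂ)‖ :=
          norm_sub_le _ _
        _ ≤ 2 := by linarith [v.2, v'.2]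
      have hc : ((1/2 : NNReal) : ℝ) = 1/2 := by norm_num
      rw [hc]
      linarith
  set vstar : W → X := fun w => ContractingWith.fixedPoint (T w) (hcontr w) with hvstar
  have hfix : ∀ w, T w (vstar w) = vstar w := fun w => (hcontr w).fixedPoint_isFixedPt
  -- Lipschitz continuity of vstar
  have hvlip : ∀ w w' : W, dist (vstar w) (vstar w') ≤ 200 * Cinv * dist w w' := by
    intro w w'
    have key : ∀ v : X, dist (T w v) (T w' v) ≤ 100 * Cinv * dist w w' := by
      intro v
      rw [Subtype.dist_eq, dist_eq_norm]
      have hxx : xraw w (v : Fin n → ℂ) - xraw w' (v : Fin n → ℂ)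
          = B₁.mulVec ((w : Fin n → ℂ) - (w' : Fin n → ℂ)) := by
        rw [hxraw]; simp only
        rw [← Matrix.mulVec_sub]
        congr 1
        rw [hinner]; simp only
        abel
      have h1 : ‖(T w v : Fin n → ℂ) - (T w' v : Fin n → ℂ)‖
          ≤ 100 * ‖xraw w (v : Fin n → ℂ) - xraw w' (v : Fin n → ℂ)‖ :=
        hQdiff _ _ (hxdom w _ v.2) (hxdom w' _ v.2)
      have h2' : ‖xraw w (v : Fin n → ℂ) - xraw w' (v : Fin n → ℂ)‖
          ≤ Cinv * ‖(w : Fin n → ℂ) - (w' : Fin n → ℂ)‖ := by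
        rw [hxx]
        calc ‖B₁.mulVec _‖ ≤ SA B₁ * ‖(w : Fin n → ℂ) - (w' : Fin n → ℂ)‖ := norm_mulVec_le _ _
          _ ≤ Cinv * ‖(w : Fin n → ℂ) - (w' : Fin n → ℂ)‖ :=
            mul_le_mul_of_nonneg_right hSB (norm_nonneg _)
      have hd : dist w w' = ‖(w : Fin n → ℂ) - (w' : Fin n → ℂ)‖ := by
        rw [Subtype.dist_eq, dist_eq_norm]
      rw [hd]
      nlinarith [norm_nonneg ((w : Fin n → ℂ) - (w' : Fin n → ℂ))]
    have := ContractingWith.fixedPoint_lipschitz_in_map (hcontr w) (hcontr w')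
      (C := 100 * Cinv * dist w w') key
    have hhalf : (1 : ℝ) - ((1/2 : NNReal) : ℝ) = 1/2 := by norm_num
    calc dist (vstar w) (vstar w') ≤ 100 * Cinv * dist w w' / (1 - ((1/2 : NNReal) : ℝ)) := this
      _ = 200 * Cinv * dist w w' := by rw [hhalf]; ring
  have hvcont : Continuous fun w : W => (vstar w : Fin n → ℂ) := by
    apply continuous_subtype_val.comp
    apply LipschitzWith.continuous (K := Real.toNNReal (200 * Cinv))
    apply LipschitzWith.of_dist_le_mul
    intro w w'
    have := hvlip w w'
    rwa [Real.coe_toNNReal _ (by positivity)]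
  -- the x function
  set xfun : W → (Fin n → ℂ) := fun w => xraw w (vstar w : Fin n → ℂ) with hxfun
  have hxfun_dom : ∀ (w : W) (j : Fin n), Complex.abs (xfun w j) ≤ 1/2 :=
    fun w j => hxdom w _ (vstar w).2 j
  have hxfun_cont : Continuous xfun := by
    rw [hxfun, hxraw]
    simp only
    apply (continuous_mulVec B₁).comp
    rw [hinner]
    simp only
    apply Continuous.sub
    apply Continuous.sub continuous_subtype_val
    · exact (continuous_mulVec E₂).comp hvcont
    · exact continuous_const
  -- the three functions
  set u₁ : W → (Fin n → ℂ) := fun w => Pv (xfun w) with hu₁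
  set u₂ : W → (Fin n → ℂ) := fun w => (vstar w : Fin n → ℂ) with hu₂
  set u₃ : W → (Fin n → ℂ) := fun _ => onev with hu₃
  have hu₂eq : ∀ w, u₂ w = Qv (xfun w) := by
    intro w
    exact (congrArg Subtype.val (hfix w)).symm
  refine ⟨u₁, u₂, u₃, ?_, ?_, ?_, ?_, ?_, ?_, ?_⟩
  · -- continuity of u₁
    rw [Metric.continuous_iff]
    intro a ε hε
    rw [Metric.continuous_iff] at hxfun_cont
    obtain ⟨δ, hδ, hd⟩ := hxfun_cont a (ε/101) (by linarith)
    refine ⟨δ, hδ, fun b hb => ?_⟩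
    have h1 : dist (u₁ b) (u₁ a) ≤ 100 * dist (xfun b) (xfun a) := by
      rw [dist_eq_norm, dist_eq_norm]
      have h0 : (0:ℝ) ≤ 100 * ‖xfun b - xfun a‖ := by positivity
      rw [pi_norm_le_iff_of_nonneg h0]
      intro j
      have he : ‖(u₁ b - u₁ a) j‖ = Complex.abs (gen Complex.I (xfun b j) - gen Complex.I (xfun a j)) := by
        simp [u₁, Pv, Complex.norm_eq_abs]
      rw [he]
      calc Complex.abs (gen Complex.I (xfun b j) - gen Complex.I (xfun a j))
          ≤ 100 * Complex.abs (xfun b j - xfun a j) :=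
            gen_lip (by simp) (hxfun_dom b j) (hxfun_dom a j)
        _ ≤ 100 * ‖xfun b - xfun a‖ := by
            have := norm_le_pi_norm (xfun b - xfun a) j
            rw [Complex.norm_eq_abs] at this
            simp only [Pi.sub_apply] at this ⊢
            linarith
    have := hd b hb
    linarith
  · exact hvcont
  · exact continuous_const
  · intro w j
    rw [Complex.norm_eq_abs]
    exact gen_abs (by simp) (by simp) (hxfun_dom w j)
  · intro w j
    rw [hu₂eq w, Complex.norm_eq_abs]
    exact gen_abs (by simp) (by simp) (hxfun_dom w j)
  · intro w j; simp [u₃, onev]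
  · -- the equation
    intro w
    have hsum : u₁ w + u₂ w + u₃ w = xfun w := by
      funext j
      rw [hu₂eq w]
      have : u₁ w j + Qv (xfun w) j + u₃ w j
          = gen Complex.I (xfun w j) + gen (-Complex.I) (xfun w j) + 1 := by
        simp [u₁, u₃, Pv, Qv, onev]
      simp only [Pi.add_apply]
      rw [this, gen_add]
      ring
    have hkey : g₁.mulVec (xfun w) = inner w (vstar w : Fin n → ℂ) := by
      rw [hxfun, hxraw]
      simp only
      rw [Matrix.mulVec_mulVec, hB₁, Matrix.one_mulVec]
    have hgg2 : g₁ + E₂ = g₂ := by rw [hE₂]; abel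
    have e2 : g₂.mulVec (u₂ w) = g₁.mulVec (u₂ w) + E₂.mulVec (u₂ w) := by
      rw [← hgg2, Matrix.add_mulVec]
    have hgg3 : g₁ + E₃ = g₃ := by rw [hE₃]; abel
    have e3 : g₃.mulVec (u₃ w) = g₁.mulVec (u₃ w) + E₃.mulVec (u₃ w) := by
      rw [← hgg3, Matrix.add_mulVec]
    have hg1 : g₁.mulVec (u₁ w) + g₁.mulVec (u₂ w) + g₁.mulVec (u₃ w)
        = inner w (vstar w : Fin n → ℂ) := by
      rw [← Matrix.mulVec_add, ← Matrix.mulVec_add, hsum, hkey]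
    rw [e2, e3]
    have hinner_eq : inner w (vstar w : Fin n → ℂ)
        = (w : Fin n → ℂ) - E₂.mulVec (u₂ w) - E₃.mulVec (u₃ w) := by
      rw [hinner]
    have : g₁.mulVec (u₁ w) + (g₁.mulVec (u₂ w) + E₂.mulVec (u₂ w))
        + (g₁.mulVec (u₃ w) + E₃.mulVec (u₃ w))
        = (g₁.mulVec (u₁ w) + g₁.mulVec (u₂ w) + g₁.mulVec (u₃ w))
          + E₂.mulVec (u₂ w) + E₃.mulVec (u₃ w) := by abel
    rw [this, hg1, hinner_eq]
    abel


lemma entry_le_SA (A : Matrix (Fin n) (Fin n) ℂ) (j k : Fin n) : ‖A j k‖ ≤ SA A := by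
  have h1 : ‖A j k‖ ≤ ∑ k', ‖A j k'‖ :=
    Finset.single_le_sum (f := fun k' => ‖A j k'‖) (fun i _ => norm_nonneg _) (Finset.mem_univ k)
  have h2 : ∑ k', ‖A j k'‖ ≤ SA A :=
    Finset.single_le_sum (f := fun j' => ∑ k', ‖A j' k'‖)
      (fun i _ => Finset.sum_nonneg fun _ _ => norm_nonneg _) (Finset.mem_univ j)
  linarith

def VE (v : Fin n → ℂ) : EuclideanSpace ℂ (Fin n) := (WithLp.equiv 2 (Fin n → ℂ)).symm v

lemma VE_add (a b : Fin n → ℂ) : VE (a + b) = VE a + VE b := rfl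

lemma norm_VE_eq (v : Fin n → ℂ) : ‖VE v‖ = Real.sqrt (∑ j, ‖v j‖^2) := by
  rw [EuclideanSpace.norm_eq]; rfl

lemma sup_le_VE (v : Fin n → ℂ) : ‖v‖ ≤ ‖VE v‖ := by
  rw [pi_norm_le_iff_of_nonneg (norm_nonneg (VE v))]
  intro j
  rw [norm_VE_eq]
  have h1 : ‖v j‖^2 ≤ ∑ i, ‖v i‖^2 :=
    Finset.single_le_sum (f := fun i => ‖v i‖^2) (fun i _ => sq_nonneg _) (Finset.mem_univ j)
  calc ‖v j‖ = Real.sqrt (‖v j‖^2) := (Real.sqrt_sq (norm_nonneg _)).symm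
    _ ≤ _ := Real.sqrt_le_sqrt h1

lemma VE_le_sqrt (v : Fin n → ℂ) : ‖VE v‖ ≤ Real.sqrt n * ‖v‖ := by
  rw [norm_VE_eq]
  have h1 : ∑ j, ‖v j‖^2 ≤ (n : ℝ) * ‖v‖^2 := by
    calc ∑ j, ‖v j‖^2 ≤ ∑ _j : Fin n, ‖v‖^2 := by
          apply Finset.sum_le_sum; intro j _
          exact pow_le_pow_left₀ (norm_nonneg _) (norm_le_pi_norm v j) 2
      _ = (n : ℝ) * ‖v‖^2 := by simp [Finset.sum_const, Finset.card_univ, nsmul_eq_mul]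
  calc Real.sqrt (∑ j, ‖v j‖^2) ≤ Real.sqrt ((n:ℝ) * ‖v‖^2) := Real.sqrt_le_sqrt h1
    _ = Real.sqrt n * ‖v‖ := by
        rw [Real.sqrt_mul (Nat.cast_nonneg n), Real.sqrt_sq (norm_nonneg v)]

lemma greedy_step (hn : 0 < n) (Cinv Bs : ℝ) (hC : 1 ≤ Cinv) (hBs : 0 ≤ Bs)
    (g B : Matrix (Fin n) (Fin n) ℂ) (hgB : g * B = 1)
    (hSAB : SA B ≤ Cinv) (hSAg : SA g ≤ Bs) (S : Fin n → ℂ) :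
    ∃ c : Fin n → ℂ, (∀ k, ‖c k‖ = 1) ∧
      ‖VE (S + g.mulVec c)‖
        ≤ max (‖VE S‖) (Real.sqrt n * Cinv * n * Bs^2 + Real.sqrt n * Bs) := by
  set w : Fin n → ℂ := fun k => ∑ j, (starRingEnd ℂ) (S j) * g j k with hw
  set c : Fin n → ℂ := fun k =>
    if w k = 0 then 1 else -((starRingEnd ℂ) (w k)) / ((Complex.abs (w k) : ℝ) : ℂ) with hcdef
  have hc1 : ∀ k, ‖c k‖ = 1 := by
    intro k
    rw [hcdef]
    by_cases h : w k = 0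
    · simp [h]
    · simp only [h, if_false]
      rw [norm_div, norm_neg]
      have h1 : ‖(starRingEnd ℂ) (w k)‖ = Complex.abs (w k) := by
        rw [Complex.norm_eq_abs, Complex.abs_conj]
      have h2 : ‖((Complex.abs (w k) : ℝ) : ℂ)‖ = Complex.abs (w k) := by
        rw [Complex.norm_real, Real.norm_eq_abs, _root_.abs_of_nonneg (Complex.abs.nonneg _)]
      rw [h1, h2, div_self]
      exact (Complex.abs.ne_zero h)
  have hcw : ∀ k, c k * w k = -((Complex.abs (w k) : ℝ) : ℂ) := by
    intro k
    rw [hcdef]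
    by_cases h : w k = 0
    · simp [h]
    · simp only [h, if_false]
      have habs : ((Complex.abs (w k) : ℝ) : ℂ) ≠ 0 := by
        simp [Complex.abs.ne_zero h]
      field_simp
      rw [mul_comm ((starRingEnd ℂ) (w k)) (w k), Complex.mul_conj]
      rw [← Complex.sq_abs]
      push_cast
      ring
  have hinner : (inner ℂ (VE S) (VE (g.mulVec c)) : ℂ)
      = ((-(∑ k, Complex.abs (w k)) : ℝ) : ℂ) := by
    have h1 : (inner ℂ (VE S) (VE (g.mulVec c)) : ℂ)
        = ∑ j, (starRingEnd ℂ) (S j) * (g.mulVec c) j := by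
      rw [PiLp.inner_apply]
      apply Finset.sum_congr rfl
      intro j _
      rw [RCLike.inner_apply']; rfl
    rw [h1]
    have h2 : ∀ j, (starRingEnd ℂ) (S j) * (g.mulVec c) j
        = ∑ k, (starRingEnd ℂ) (S j) * g j k * c k := by
      intro j
      rw [Matrix.mulVec, dotProduct, Finset.mul_sum]
      apply Finset.sum_congr rfl; intro k _; ring
    rw [Finset.sum_congr rfl (fun j _ => h2 j), Finset.sum_comm]
    have h3 : ∀ k, ∑ j, (starRingEnd ℂ) (S j) * g j k * c k = c k * w k := by
      intro k
      rw [hw]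
      simp only
      rw [Finset.mul_sum]
      apply Finset.sum_congr rfl; intro j _; ring
    rw [Finset.sum_congr rfl (fun k _ => h3 k)]
    rw [Finset.sum_congr rfl (fun k _ => hcw k)]
    push_cast
    rw [← Finset.sum_neg_distrib]
  have habsw_nonneg : (0:ℝ) ≤ ∑ k, Complex.abs (w k) :=
    Finset.sum_nonneg fun k _ => Complex.abs.nonneg _
  have hS_le : ‖VE S‖ ≤ Real.sqrt n * (Cinv * ∑ k, Complex.abs (w k)) := by
    have hBHgH : B.conjTranspose * g.conjTranspose = 1 := by
      rw [← Matrix.conjTranspose_mul, hgB, Matrix.conjTranspose_one]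
    have hu : g.conjTranspose.mulVec S = fun k => (starRingEnd ℂ) (w k) := by
      funext k
      rw [Matrix.mulVec, dotProduct, hw]
      simp only
      rw [map_sum]
      apply Finset.sum_congr rfl
      intro j _
      rw [map_mul, Complex.conj_conj, Matrix.conjTranspose_apply]
      rw [← starRingEnd_apply]
      ring
    have hrecon : S = B.conjTranspose.mulVec (fun k => (starRingEnd ℂ) (w k)) := by
      rw [← hu, Matrix.mulVec_mulVec, hBHgH, Matrix.one_mulVec]
    have hcoord : ∀ j, ‖S j‖ ≤ Cinv * ∑ k, Complex.abs (w k) := by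
      intro j
      conv_lhs => rw [hrecon]
      have h1 : ‖B.conjTranspose.mulVec (fun k => (starRingEnd ℂ) (w k)) j‖
          ≤ ∑ k, ‖B.conjTranspose j k‖ * Complex.abs (w k) := by
        rw [Matrix.mulVec, dotProduct]
        refine (norm_sum_le _ _).trans (le_of_eq ?_)
        apply Finset.sum_congr rfl; intro k _
        rw [norm_mul]
        congr 1
        rw [Complex.norm_eq_abs, Complex.abs_conj]
      refine h1.trans ?_
      rw [Finset.mul_sum]
      apply Finset.sum_le_sum
      intro k _
      apply mul_le_mul_of_nonneg_right _ (Complex.abs.nonneg _)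
      calc ‖B.conjTranspose j k‖ = ‖B k j‖ := by
            rw [Matrix.conjTranspose_apply, ← starRingEnd_apply, Complex.norm_eq_abs,
              Complex.abs_conj, Complex.norm_eq_abs]
        _ ≤ SA B := entry_le_SA B k j
        _ ≤ Cinv := hSAB
    calc ‖VE S‖ ≤ Real.sqrt n * ‖S‖ := VE_le_sqrt S
      _ ≤ Real.sqrt n * (Cinv * ∑ k, Complex.abs (w k)) := by
          apply mul_le_mul_of_nonneg_left _ (Real.sqrt_nonneg _)
          rw [pi_norm_le_iff_of_nonneg (by positivity)]
          exact hcoord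
  have hcnorm : ‖c‖ ≤ 1 := by
    rw [pi_norm_le_iff_of_nonneg zero_le_one]
    intro k; exact le_of_eq (hc1 k)
  have hgc : ‖VE (g.mulVec c)‖ ≤ Real.sqrt n * Bs := by
    calc ‖VE (g.mulVec c)‖ ≤ Real.sqrt n * ‖g.mulVec c‖ := VE_le_sqrt _
      _ ≤ Real.sqrt n * (SA g * ‖c‖) :=
          mul_le_mul_of_nonneg_left (norm_mulVec_le g c) (Real.sqrt_nonneg _)
      _ ≤ Real.sqrt n * Bs := by
          apply mul_le_mul_of_nonneg_left _ (Real.sqrt_nonneg _)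
          calc SA g * ‖c‖ ≤ Bs * 1 :=
            mul_le_mul hSAg hcnorm (norm_nonneg c) hBs
          _ = Bs := mul_one _
  refine ⟨c, hc1, ?_⟩
  by_cases hcase : ‖VE S‖ ≤ Real.sqrt n * Cinv * n * Bs^2
  · -- triangle inequality case
    have : ‖VE (S + g.mulVec c)‖ ≤ ‖VE S‖ + ‖VE (g.mulVec c)‖ := by
      rw [VE_add]; exact norm_add_le _ _
    refine le_max_of_le_right ?_
    calc ‖VE (S + g.mulVec c)‖ ≤ ‖VE S‖ + ‖VE (g.mulVec c)‖ := this
      _ ≤ Real.sqrt n * Cinv * n * Bs^2 + Real.sqrt n * Bs := by linarith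
  · push_neg at hcase
    refine le_max_of_le_left ?_
    have hsq : ‖VE S + VE (g.mulVec c)‖^2
        = ‖VE S‖^2 + 2 * RCLike.re (inner ℂ (VE S) (VE (g.mulVec c)) : ℂ)
          + ‖VE (g.mulVec c)‖^2 := norm_add_sq _ _
    have hre : RCLike.re (inner ℂ (VE S) (VE (g.mulVec c)) : ℂ) = -(∑ k, Complex.abs (w k)) := by
      rw [hinner]
      simp [RCLike.re_to_complex]
    have hsqrtn_pos : (0:ℝ) < Real.sqrt n := by
      apply Real.sqrt_pos.mpr
      exact_mod_cast hn
    have hsum_ge : (n:ℝ) * Bs^2 ≤ ∑ k, Complex.abs (w k) := by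
      have h1 : Real.sqrt n * Cinv * ((n:ℝ) * Bs^2) ≤ Real.sqrt n * Cinv * (∑ k, Complex.abs (w k)) := by
        calc Real.sqrt n * Cinv * ((n:ℝ) * Bs^2) = Real.sqrt n * Cinv * n * Bs^2 := by ring
          _ ≤ ‖VE S‖ := le_of_lt hcase
          _ ≤ Real.sqrt n * (Cinv * ∑ k, Complex.abs (w k)) := hS_le
          _ = Real.sqrt n * Cinv * (∑ k, Complex.abs (w k)) := by ring
      have hpos : (0:ℝ) < Real.sqrt n * Cinv := by positivity
      exact le_of_mul_le_mul_left h1 hpos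
    have hgc2 : ‖VE (g.mulVec c)‖^2 ≤ (n:ℝ) * Bs^2 := by
      have := hgc
      have h2 : (Real.sqrt n * Bs)^2 = (n:ℝ) * Bs^2 := by
        rw [mul_pow, Real.sq_sqrt (Nat.cast_nonneg n)]
      nlinarith [norm_nonneg (VE (g.mulVec c))]
    have hfinal_sq : ‖VE S + VE (g.mulVec c)‖^2 ≤ ‖VE S‖^2 := by
      rw [hsq, hre]
      nlinarith
    have h1 := norm_nonneg (VE S + VE (g.mulVec c))
    have h2 := norm_nonneg (VE S)
    rw [VE_add]
    nlinarith

lemma SA_sub_comm (A B : Matrix (Fin n) (Fin n) ℂ) : SA (A - B) = SA (B - A) := by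
  unfold SA
  apply Finset.sum_congr rfl; intro j _
  apply Finset.sum_congr rfl; intro k _
  rw [show (A - B) j k = A j k - B j k from rfl, show (B - A) j k = B j k - A j k from rfl,
    norm_sub_rev]

lemma SA_sub_triangle (A B C : Matrix (Fin n) (Fin n) ℂ) :
    SA (A - C) ≤ SA (A - B) + SA (B - C) := by
  unfold SA
  rw [← Finset.sum_add_distrib]
  apply Finset.sum_le_sum; intro j _
  rw [← Finset.sum_add_distrib]
  apply Finset.sum_le_sum; intro k _
  have : (A - C) j k = (A - B) j k + (B - C) j k := by
    show A j k - C j k = (A j k - B j k) + (B j k - C j k); ring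
  rw [this]
  exact norm_add_le _ _

lemma SA_self_sub (A : Matrix (Fin n) (Fin n) ℂ) : SA (A - A) = 0 := by
  unfold SA
  apply Finset.sum_eq_zero; intro j _
  apply Finset.sum_eq_zero; intro k _
  rw [show (A - A) j k = A j k - A j k from rfl]
  simp

lemma greedy (hn : 0 < n) (Cinv Bs : ℝ) (hC : 1 ≤ Cinv) (hBs : 0 ≤ Bs)
    {m : ℕ} (s : Finset (Fin m)) (g : Fin m → Matrix (Fin n) (Fin n) ℂ)
    (hg : ∀ i, ∃ B, g i * B = 1 ∧ SA B ≤ Cinv ∧ SA (g i) ≤ Bs) :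
    ∃ c : Fin m → (Fin n → ℂ), (∀ i k, ‖c i k‖ = 1) ∧
      ‖VE (∑ i ∈ s, (g i).mulVec (c i))‖
        ≤ Real.sqrt n * Cinv * n * Bs^2 + Real.sqrt n * Bs := by
  classical
  have hR₀ : 0 ≤ Real.sqrt n * Cinv * n * Bs^2 + Real.sqrt n * Bs := by
    have h1 : 0 ≤ Real.sqrt n * Cinv := mul_nonneg (Real.sqrt_nonneg _) (by linarith)
    have h2 : 0 ≤ Real.sqrt n * Cinv * n := mul_nonneg h1 (Nat.cast_nonneg n)
    have h3 : 0 ≤ Real.sqrt n * Cinv * n * Bs^2 := mul_nonneg h2 (sq_nonneg _)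
    have h4 : 0 ≤ Real.sqrt n * Bs := mul_nonneg (Real.sqrt_nonneg _) hBs
    linarith
  induction s using Finset.cons_induction with
  | empty =>
    refine ⟨fun _ _ => 1, by simp, ?_⟩
    simp only [Finset.sum_empty]
    have : VE (0 : Fin n → ℂ) = 0 := rfl
    rw [this, norm_zero]
    exact hR₀
  | cons a s ha ih =>
    obtain ⟨c, hc1, hc2⟩ := ih
    obtain ⟨B, hB1, hB2, hB3⟩ := hg a
    obtain ⟨c₀, hc₀1, hc₀2⟩ := greedy_step hn Cinv Bs hC hBs (g a) B hB1 hB2 hB3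
      (∑ i ∈ s, (g i).mulVec (c i))
    refine ⟨Function.update c a c₀, ?_, ?_⟩
    · intro i k
      by_cases h : i = a
      · subst h; rw [Function.update_self]; exact hc₀1 k
      · rw [Function.update_of_ne h]; exact hc1 i k
    · rw [Finset.sum_cons]
      have hs : ∑ i ∈ s, (g i).mulVec (Function.update c a c₀ i)
          = ∑ i ∈ s, (g i).mulVec (c i) := by
        apply Finset.sum_congr rfl; intro i hi
        rw [Function.update_of_ne (show i ≠ a from fun he => ha (by rwa [he] at hi))]
      rw [hs, Function.update_self]
      have heq : (g a).mulVec c₀ + ∑ i ∈ s, (g i).mulVec (c i)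
          = (∑ i ∈ s, (g i).mulVec (c i)) + (g a).mulVec c₀ := by abel
      rw [heq]
      refine hc₀2.trans ?_
      exact max_le hc2 le_rfl

end S12

theorem stmt12 (n : ℕ) (K : Set (Matrix (Fin n) (Fin n) ℂ))
    (hK : ∀ g ∈ K, g.det ≠ 0) (hc : IsCompact K) :
    ∃ m₀ : ℕ, 0 < m₀ ∧ ∀ m : ℕ, m₀ ≤ m →
      ∀ g : Fin m → Matrix (Fin n) (Fin n) ℂ, (∀ i, g i ∈ K) →
        ∃ f : Fin m → ({z : Fin n → ℂ // ∀ j, ‖z j‖ ≤ 1} → (Fin n → ℂ)),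
          (∀ i, Continuous (f i)) ∧
          (∀ i z j, ‖f i z j‖ = 1) ∧
          ∀ z : {z : Fin n → ℂ // ∀ j, ‖z j‖ ≤ 1},
            ∑ i, Matrix.mulVec (g i) (f i z) = (z : Fin n → ℂ) := by
  classical
  open S12 in
  -- trivial case n = 0
  rcases Nat.eq_zero_or_pos n with hn0 | hn
  · refine ⟨1, one_pos, fun m hm g hgK => ?_⟩
    refine ⟨fun _ _ _ => 1, fun _ => continuous_const, fun _ _ _ => norm_one, fun z => ?_⟩
    funext j
    exact absurd j.isLt (by omega)
  -- trivial case K = ∅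
  by_cases hKe : K = ∅
  · refine ⟨1, one_pos, fun m hm g hgK => ?_⟩
    exact absurd (hgK ⟨0, by omega⟩) (by simp [hKe])
  have hKne : K.Nonempty := Set.nonempty_iff_ne_empty.mpr hKe
  -- upper bound Bs for SA on K
  obtain ⟨gB, hgBK, hgBmax⟩ := hc.exists_isMaxOn hKne continuous_SA.continuousOn
  set Bs : ℝ := max (S12.SA gB) 0 with hBsdef
  have hBs0 : 0 ≤ Bs := le_max_right _ _
  have hBs : ∀ g ∈ K, S12.SA g ≤ Bs := fun g hg => le_trans (hgBmax hg) (le_max_left _ _)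
  -- upper bound Cinv for SA of inverses on K
  have hinvcont : ContinuousOn (fun g : Matrix (Fin n) (Fin n) ℂ => S12.SA g⁻¹) K := by
    have hadj : Continuous fun A : Matrix (Fin n) (Fin n) ℂ => A.adjugate :=
      continuous_id.matrix_adjugate
    have hdet : Continuous fun A : Matrix (Fin n) (Fin n) ℂ => A.det :=
      continuous_id.matrix_det
    have hdetinv : ContinuousOn (fun A : Matrix (Fin n) (Fin n) ℂ => (A.det)⁻¹) K :=
      hdet.continuousOn.inv₀ (fun g hg => hK g hg)
    have hbase : ContinuousOn (fun A : Matrix (Fin n) (Fin n) ℂ => (A.det)⁻¹ • A.adjugate) K :=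
      hdetinv.smul hadj.continuousOn
    have heq : Set.EqOn (fun g : Matrix (Fin n) (Fin n) ℂ => g⁻¹)
        (fun A : Matrix (Fin n) (Fin n) ℂ => (A.det)⁻¹ • A.adjugate) K := by
      intro g _
      show g⁻¹ = _
      rw [Matrix.inv_def, Ring.inverse_eq_inv]
    exact continuous_SA.comp_continuousOn (hbase.congr heq)
  obtain ⟨gC, hgCK, hgCmax⟩ := hc.exists_isMaxOn hKne hinvcont
  set Cinv : ℝ := max (S12.SA (gC⁻¹)) 1 with hCinvdef
  have hC1 : (1:ℝ) ≤ Cinv := le_max_right _ _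
  have hC0 : (0:ℝ) < Cinv := by linarith
  have hCinv : ∀ g ∈ K, S12.SA g⁻¹ ≤ Cinv := fun g hg => le_trans (hgCmax hg) (le_max_left _ _)
  have hinv : ∀ g ∈ K, g * g⁻¹ = 1 :=
    fun g hg => Matrix.mul_nonsing_inv g (isUnit_iff_ne_zero.mpr (hK g hg))
  -- covering
  set ρ : ℝ := 1 / (400 * Cinv) with hρdef
  have hρpos : 0 < ρ := by rw [hρdef]; positivity
  have hUopen : ∀ h₀ : Matrix (Fin n) (Fin n) ℂ,
      IsOpen {x : Matrix (Fin n) (Fin n) ℂ | S12.SA (x - h₀) < ρ} := by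
    intro h₀
    exact isOpen_lt (continuous_SA.comp (continuous_id.sub continuous_const)) continuous_const
  have hcover : K ⊆ ⋃ h₀ : Matrix (Fin n) (Fin n) ℂ, {x | S12.SA (x - h₀) < ρ} := by
    intro x _
    exact Set.mem_iUnion.mpr ⟨x, by simp only [Set.mem_setOf_eq, SA_self_sub]; exact hρpos⟩
  obtain ⟨t, ht⟩ := hc.elim_finite_subcover _ hUopen hcover
  have htne : t.Nonempty := by
    obtain ⟨x, hx⟩ := hKne
    obtain ⟨i, hi, _⟩ := Set.mem_iUnion₂.mp (ht hx)
    exact ⟨i, hi⟩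
  set M := t.card with hMdef
  have hM1 : 0 < M := Finset.card_pos.mpr htne
  -- constants
  set δ : ℝ := 1 / (8 * Cinv) with hδdef
  have hδpos : 0 < δ := by rw [hδdef]; positivity
  set R₀ : ℝ := Real.sqrt n * Cinv * n * Bs^2 + Real.sqrt n * Bs with hR₀def
  have hR₀0 : 0 ≤ R₀ := by
    have h1 : 0 ≤ Real.sqrt n * Cinv := mul_nonneg (Real.sqrt_nonneg _) (by linarith)
    have h2 : 0 ≤ Real.sqrt n * Cinv * n := mul_nonneg h1 (Nat.cast_nonneg n)
    have h3 : 0 ≤ Real.sqrt n * Cinv * n * Bs^2 := mul_nonneg h2 (sq_nonneg _)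
    have h4 : 0 ≤ Real.sqrt n * Bs := mul_nonneg (Real.sqrt_nonneg _) hBs0
    rw [hR₀def]; linarith
  set N₀ : ℕ := ⌈(1 + R₀) / δ⌉₊ + 1 with hN₀def
  have hN₀pos : 0 < N₀ := Nat.succ_pos _
  have hN₀ : 1 + R₀ ≤ (N₀ : ℝ) * δ := by
    have h1 : (1 + R₀) / δ ≤ (⌈(1 + R₀) / δ⌉₊ : ℝ) := Nat.le_ceil _
    have h2 : ((⌈(1 + R₀) / δ⌉₊ : ℕ) : ℝ) ≤ (N₀ : ℝ) := by
      rw [hN₀def]; push_cast; linarith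
    rw [div_le_iff₀ hδpos] at h1
    calc 1 + R₀ ≤ (⌈(1 + R₀) / δ⌉₊ : ℝ) * δ := h1
      _ ≤ (N₀ : ℝ) * δ := mul_le_mul_of_nonneg_right h2 (le_of_lt hδpos)
  refine ⟨N₀ * 3 * M, by positivity, fun m hm g hgK => ?_⟩
  -- pigeonhole
  have hτex : ∀ i : Fin m, ∃ h₀, h₀ ∈ t ∧ S12.SA (g i - h₀) < ρ := by
    intro i
    obtain ⟨x, hx, hm'⟩ := Set.mem_iUnion₂.mp (ht (hgK i))
    exact ⟨x, hx, hm'⟩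
  choose τ hτt hτball using hτex
  obtain ⟨h₀, hh₀t, hfib⟩ := Finset.exists_le_card_fiber_of_mul_le_card_of_maps_to
    (f := τ) (s := Finset.univ) (t := t) (fun i _ => hτt i) htne
    (by rw [Finset.card_univ, Fintype.card_fin]
        calc t.card * (N₀ * 3) = N₀ * 3 * M := by rw [hMdef]; ring
          _ ≤ m := hm)
  obtain ⟨s3, hs3sub, hs3card⟩ := Finset.exists_subset_card_eq hfib
  have hclose : ∀ i ∈ s3, S12.SA (g i - h₀) < ρ := by
    intro i hi
    have hmem := hs3sub hi
    rw [Finset.mem_filter] at hmem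
    rw [← hmem.2]
    exact hτball i
  -- pairwise closeness inside s3
  have hpair : ∀ i ∈ s3, ∀ i' ∈ s3, S12.SA (g i - g i') ≤ 1 / (200 * Cinv) := by
    intro i hi i' hi'
    calc S12.SA (g i - g i') ≤ S12.SA (g i - h₀) + S12.SA (h₀ - g i') := SA_sub_triangle _ _ _
      _ ≤ ρ + ρ := by
          have h1 := le_of_lt (hclose i hi)
          have h2 : S12.SA (h₀ - g i') ≤ ρ := by
            rw [SA_sub_comm]; exact le_of_lt (hclose i' hi')
          linarith
      _ = 1 / (200 * Cinv) := by rw [hρdef]; field_simp; ring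
  -- greedy constants on the complement
  obtain ⟨cc, hcc1, hcc2⟩ := greedy hn Cinv Bs hC1 hBs0 s3ᶜ g
    (fun i => ⟨(g i)⁻¹, hinv (g i) (hgK i), hCinv _ (hgK i), hBs _ (hgK i)⟩)
  set Svec : Fin n → ℂ := ∑ i ∈ s3ᶜ, (g i).mulVec (cc i) with hSvecdef
  have hSnorm : ‖Svec‖ ≤ R₀ := (sup_le_VE _).trans hcc2
  -- indexing of triples
  set E3 : Fin N₀ × Fin 3 ≃ Fin (N₀ * 3) := finProdFinEquiv with hE3def
  set oi := s3.orderIsoOfFin hs3card with hoidef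
  set idx : Fin N₀ → Fin 3 → Fin m := fun k r => ↑(oi (E3 (k, r))) with hidxdef
  have hidx_mem : ∀ k r, idx k r ∈ s3 := fun k r => (oi (E3 (k, r))).2
  -- triples
  have htr : ∀ k : Fin N₀,
      ∃ u₁ u₂ u₃ : {w : Fin n → ℂ // ‖w‖ ≤ 1/(8*Cinv)} → (Fin n → ℂ),
      Continuous u₁ ∧ Continuous u₂ ∧ Continuous u₃ ∧
      (∀ w j, ‖u₁ w j‖ = 1) ∧ (∀ w j, ‖u₂ w j‖ = 1) ∧ (∀ w j, ‖u₃ w j‖ = 1) ∧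
      ∀ w, (g (idx k 0)).mulVec (u₁ w) + (g (idx k 1)).mulVec (u₂ w)
        + (g (idx k 2)).mulVec (u₃ w) = (w : Fin n → ℂ) := by
    intro k
    exact triple Cinv hC1 (g (idx k 0)) (g (idx k 1)) (g (idx k 2)) ((g (idx k 0))⁻¹)
      (hinv _ (hgK _)) (hCinv _ (hgK _))
      (hpair _ (hidx_mem k 1) _ (hidx_mem k 0))
      (hpair _ (hidx_mem k 2) _ (hidx_mem k 0))
  choose U1 U2 U3 hU1c hU2c hU3c hU1n hU2n hU3n hUeq using htr
  -- target map into the small ball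
  have hWmem : ∀ z : {z : Fin n → ℂ // ∀ j, ‖z j‖ ≤ 1},
      ‖(N₀ : ℂ)⁻¹ • ((z : Fin n → ℂ) - Svec)‖ ≤ 1/(8*Cinv) := by
    intro z
    have hz1 : ‖(z : Fin n → ℂ)‖ ≤ 1 := by
      rw [pi_norm_le_iff_of_nonneg zero_le_one]; exact z.2
    have h1 : ‖(z : Fin n → ℂ) - Svec‖ ≤ 1 + R₀ := by
      calc ‖(z : Fin n → ℂ) - Svec‖ ≤ ‖(z : Fin n → ℂ)‖ + ‖Svec‖ := norm_sub_le _ _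
        _ ≤ 1 + R₀ := by linarith
    rw [norm_smul, norm_inv]
    have hN₀' : ‖((N₀ : ℕ) : ℂ)‖ = (N₀ : ℝ) := by
      rw [Complex.norm_natCast]
    rw [hN₀']
    have hN₀r : (0:ℝ) < (N₀ : ℝ) := by exact_mod_cast hN₀pos
    rw [inv_mul_le_iff₀ hN₀r]
    calc ‖(z : Fin n → ℂ) - Svec‖ ≤ 1 + R₀ := h1
      _ ≤ (N₀ : ℝ) * δ := hN₀
      _ = (N₀ : ℝ) * (1/(8*Cinv)) := by rw [hδdef]
  set Wmap : {z : Fin n → ℂ // ∀ j, ‖z j‖ ≤ 1} → {w : Fin n → ℂ // ‖w‖ ≤ 1/(8*Cinv)} :=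
    fun z => ⟨(N₀ : ℂ)⁻¹ • ((z : Fin n → ℂ) - Svec), hWmem z⟩ with hWmapdef
  have hWcont : Continuous Wmap := by
    apply Continuous.subtype_mk
    exact (continuous_subtype_val.sub continuous_const).const_smul ((N₀ : ℂ)⁻¹)
  -- roles
  set rol : (Fin N₀ × Fin 3) → {w : Fin n → ℂ // ‖w‖ ≤ 1/(8*Cinv)} → (Fin n → ℂ) :=
    fun p => ![U1 p.1, U2 p.1, U3 p.1] p.2 with hroldef
  have hrolc : ∀ p, Continuous (rol p) := by
    rintro ⟨k, r⟩
    fin_cases r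
    · simpa [hroldef] using hU1c k
    · simpa [hroldef] using hU2c k
    · simpa [hroldef] using hU3c k
  have hroln : ∀ p w j, ‖rol p w j‖ = 1 := by
    rintro ⟨k, r⟩ w j
    fin_cases r
    · simpa [hroldef] using hU1n k w j
    · simpa [hroldef] using hU2n k w j
    · simpa [hroldef] using hU3n k w j
  -- the functions
  set f : Fin m → ({z : Fin n → ℂ // ∀ j, ‖z j‖ ≤ 1} → (Fin n → ℂ)) := fun i =>
    if h : i ∈ s3 then (fun z => rol (E3.symm (oi.symm ⟨i, h⟩)) (Wmap z))
    else (fun _ => cc i) with hfdef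
  refine ⟨f, ?_, ?_, ?_⟩
  · -- continuity
    intro i
    rw [hfdef]
    by_cases h : i ∈ s3
    · simp only [dif_pos h]
      exact (hrolc _).comp hWcont
    · simp only [dif_neg h]
      exact continuous_const
  · -- unimodularity
    intro i z j
    rw [hfdef]
    by_cases h : i ∈ s3
    · simp only [dif_pos h]
      exact hroln _ _ _
    · simp only [dif_neg h]
      exact hcc1 i j
  · -- the equation
    intro z
    rw [← Finset.sum_add_sum_compl s3]
    have hB : ∑ i ∈ s3ᶜ, (g i).mulVec (f i z) = Svec := by
      rw [hSvecdef]
      apply Finset.sum_congr rfl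
      intro i hi
      have h : i ∉ s3 := Finset.mem_compl.mp hi
      rw [hfdef]
      simp only [dif_neg h]
    have hA : ∑ i ∈ s3, (g i).mulVec (f i z) = N₀ • ((Wmap z : Fin n → ℂ)) := by
      have step1 : ∑ i ∈ s3, (g i).mulVec (f i z)
          = ∑ x : {x // x ∈ s3}, (g ↑x).mulVec (rol (E3.symm (oi.symm x)) (Wmap z)) := by
        rw [← Finset.sum_attach s3 (fun i => (g i).mulVec (f i z))]
        rw [← Finset.univ_eq_attach]
        apply Finset.sum_congr rfl
        intro x _
        congr 1
        rw [hfdef]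
        simp only [dif_pos x.2]
      have step2 : ∑ x : {x // x ∈ s3}, (g ↑x).mulVec (rol (E3.symm (oi.symm x)) (Wmap z))
          = ∑ p : Fin N₀ × Fin 3, (g (idx p.1 p.2)).mulVec (rol p (Wmap z)) := by
        rw [← Equiv.sum_comp (E3.trans oi.toEquiv)
          (fun x => (g ↑x).mulVec (rol (E3.symm (oi.symm x)) (Wmap z)))]
        apply Finset.sum_congr rfl
        intro p _
        simp only [Equiv.trans_apply]
        have h1 : oi.symm (oi.toEquiv (E3 p)) = E3 p := by simp
        rw [h1, Equiv.symm_apply_apply]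
        rfl
      have step3 : ∑ p : Fin N₀ × Fin 3, (g (idx p.1 p.2)).mulVec (rol p (Wmap z))
          = ∑ k : Fin N₀, ((Wmap z : Fin n → ℂ)) := by
        rw [Fintype.sum_prod_type]
        apply Finset.sum_congr rfl
        intro k _
        have h30 : ∑ r : Fin 3, (g (idx k r)).mulVec (rol (k, r) (Wmap z))
            = (g (idx k 0)).mulVec (U1 k (Wmap z)) + (g (idx k 1)).mulVec (U2 k (Wmap z))
              + (g (idx k 2)).mulVec (U3 k (Wmap z)) := by
          rw [Fin.sum_univ_three]
          rw [hroldef]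
          simp
        rw [h30]
        exact hUeq k (Wmap z)
      rw [step1, step2, step3]
      rw [Finset.sum_const, Finset.card_univ, Fintype.card_fin]
    rw [hA, hB]
    have hWval : ((Wmap z : Fin n → ℂ)) = (N₀ : ℂ)⁻¹ • ((z : Fin n → ℂ) - Svec) := rfl
    rw [hWval]
    rw [← Nat.cast_smul_eq_nsmul ℂ, smul_smul]
    rw [mul_inv_cancel₀ (by exact_mod_cast hN₀pos.ne' : ((N₀:ℕ) : ℂ) ≠ 0), one_smul]
    abel
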